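/- Let G = (V,E) be a strongly connected directed graph on M vertices and let x^d ∈ P(V) have strongly connected support. Then there exists a matrix Q ∈ ℝ^{M×M} satisfying Q^{ij} ≥ 0 for all i ≠ j, Q^{ij} = 0 whenever i ≠ j and (i,j) ∉ E, and Σ_{j=1}^M Q^{ij} = 0 for every i, together with constants C > 0 and λ > 0, such that for every x^0 ∈ P(V) and every t ≥ 0 one has ‖exp(t Q^T) x^0 − x^d‖ ≤ C e^{−λ t} (so in particular the constant-rate Kolmogorov forward equation ẋ = Q^T x, whose solution is x(t) = exp(t Q^T) x^0, converges exponentially to x^d from every initial distribution). -/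

import Mathlib

open Matrix Filter

noncomputable section

/-- The probability simplex `P(V)` in `ℝ^M`. -/
def probSimplex (M : ℕ) : Set (Fin M → ℝ) :=
  {x | (∀ i, 0 ≤ x i) ∧ ∑ i, x i = 1}

/-- Euclidean norm on `ℝ^M`. -/
def euclNorm {M : ℕ} (v : Fin M → ℝ) : ℝ :=
  Real.sqrt (∑ i, (v i) ^ 2)

open NormedSpace

section ListAux
set_option linter.unusedSectionVars false
variable {α : Type*} [DecidableEq α]

def pairsL (p : List α) : List (α × α) := p.zip p.tail

lemma pairsL_cons_cons (a b : α) (l : List α) :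
    pairsL (a :: b :: l) = (a, b) :: pairsL (b :: l) := rfl

lemma countP_snd_pairsL (p : List α) (j : α) :
    (pairsL p).countP (fun pr => pr.2 = j) = p.tail.count j := by
  induction p with
  | nil => rfl
  | cons a l ih =>
    cases l with
    | nil => rfl
    | cons b l' =>
      rw [pairsL_cons_cons, List.countP_cons, ih]
      simp [List.count_cons]

lemma countP_fst_pairsL (p : List α) (j : α) :
    (pairsL p).countP (fun pr => pr.1 = j) = p.dropLast.count j := by
  induction p with
  | nil => rfl
  | cons a l ih =>
    cases l with
    | nil => rfl
    | cons b l' =>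
      rw [pairsL_cons_cons, List.countP_cons, ih]
      rw [show (a :: b :: l').dropLast = a :: (b :: l').dropLast from rfl]
      simp [List.count_cons]

lemma sum_count_snd [Fintype α] (L : List (α × α)) (j : α) :
    ∑ x : α, L.count (x, j) = L.countP (fun pr => pr.2 = j) := by
  induction L with
  | nil => simp
  | cons pr L ih =>
    simp only [List.count_cons, beq_iff_eq, List.countP_cons, Finset.sum_add_distrib, ih,
      decide_eq_true_eq]
    congr 1
    have hx : ∀ x : α, (pr = (x, j)) = (pr.1 = x ∧ pr.2 = j) := by
      intro x; rw [eq_iff_iff, Prod.ext_iff]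
    by_cases h : pr.2 = j
    · simp [hx, h, Finset.filter_eq, Finset.filter_eq']
    · simp [hx, h]

lemma sum_count_fst [Fintype α] (L : List (α × α)) (j : α) :
    ∑ y : α, L.count (j, y) = L.countP (fun pr => pr.1 = j) := by
  induction L with
  | nil => simp
  | cons pr L ih =>
    simp only [List.count_cons, beq_iff_eq, List.countP_cons, Finset.sum_add_distrib, ih,
      decide_eq_true_eq]
    congr 1
    have hy : ∀ y : α, (pr = (j, y)) = (pr.1 = j ∧ pr.2 = y) := by
      intro y; rw [eq_iff_iff, Prod.ext_iff]
    by_cases h : pr.1 = j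
    · simp [hy, h, Finset.filter_eq, Finset.filter_eq']
    · simp [hy, h]

lemma count_cons_eq (j a : α) (l : List α) :
    List.count j (a :: l) = List.count j l + (if a = j then 1 else 0) := by
  by_cases h : a = j
  · subst h; simp
  · simp [List.count_cons_of_ne (Ne.symm h), h]

/-- conservation for a closed walk -/
lemma closed_walk_conservation [Fintype α] (p : List α) (hne : p ≠ [])
    (hclosed : p.head hne = p.getLast hne) (j : α) :
    ∑ x : α, (pairsL p).count (x, j) = ∑ y : α, (pairsL p).count (j, y) := by
  rw [sum_count_snd, sum_count_fst, countP_snd_pairsL, countP_fst_pairsL]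
  have h1 : p.count j = p.tail.count j + (if p.head hne = j then 1 else 0) := by
    conv_lhs => rw [← List.cons_head_tail hne]
    rw [count_cons_eq]
  have h2 : p.count j = p.dropLast.count j + (if p.getLast hne = j then 1 else 0) := by
    conv_lhs => rw [← List.dropLast_append_getLast hne]
    rw [List.count_append]
    congr 1
    by_cases h : p.getLast hne = j
    · simp [h]
    · rw [if_neg h, List.count_eq_zero]
      simpa using Ne.symm h
  rw [hclosed] at h1
  omega

/-- pairs occurring in a chain are related -/
lemma chain_pairs_rel {r : α → α → Prop} : ∀ (a : α) (l : List α), List.Chain r a l →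
    ∀ x y : α, (x, y) ∈ pairsL (a :: l) → r x y := by
  intro a l
  induction l generalizing a with
  | nil => intro _ x y h; simp [pairsL] at h
  | cons b l' ih =>
    intro hc x y hmem
    rw [pairsL_cons_cons] at hmem
    rcases List.mem_cons.1 hmem with h | h
    · obtain ⟨h1, h2⟩ := Prod.ext_iff.1 h
      subst h1; subst h2
      exact (List.chain_cons.1 hc).1
    · exact ih b (List.chain_cons.1 hc).2 x y h
end ListAux

section Circulation
variable {M : ℕ}

lemma exists_circulation (r : Fin M → Fin M → Prop)
    (hr : ∀ a b, r a b → Relation.ReflTransGen r b a) :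
    ∃ w : Fin M → Fin M → ℝ,
      (∀ x y, 0 ≤ w x y) ∧
      (∀ x y, ¬ r x y → w x y = 0) ∧
      (∀ x y, r x y → 0 < w x y) ∧
      (∀ j, ∑ x, w x j = ∑ y, w j y) := by
  classical
  have hcyc : ∀ e : Fin M × Fin M, ∃ p : List (Fin M),
      r e.1 e.2 → (∃ hne : p ≠ [], p.head hne = p.getLast hne) ∧
        (∀ x y, (x, y) ∈ pairsL p → r x y) ∧ (e.1, e.2) ∈ pairsL p := by
    intro e
    by_cases h : r e.1 e.2
    · obtain ⟨l, hl, hlast⟩ := List.exists_isChain_cons_of_relationReflTransGen (hr _ _ h)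
      refine ⟨e.1 :: e.2 :: l, fun _ => ⟨⟨by simp, ?_⟩, ?_, ?_⟩⟩
      · rw [List.getLast_cons_cons]
        simpa using hlast.symm
      · exact chain_pairs_rel _ _ (List.chain_cons.2 ⟨h, hl⟩)
      · rw [pairsL_cons_cons]; exact List.mem_cons_self
    · exact ⟨[], fun hh => absurd hh h⟩
  choose cyc hcyc using hcyc
  refine ⟨fun x y => ∑ e : Fin M × Fin M,
      if r e.1 e.2 then ((pairsL (cyc e)).count (x, y) : ℝ) else 0, ?_, ?_, ?_, ?_⟩
  · intro x y
    apply Finset.sum_nonneg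
    intro e _
    split <;> positivity
  · intro x y hxy
    apply Finset.sum_eq_zero
    intro e _
    split
    · rename_i h
      obtain ⟨_, hrel, _⟩ := hcyc e h
      norm_cast
      rw [List.count_eq_zero]
      intro hmem
      exact hxy (hrel x y hmem)
    · rfl
  · intro x y hxy
    apply Finset.sum_pos'
    · intro e _
      split <;> positivity
    · refine ⟨(x, y), Finset.mem_univ _, ?_⟩
      obtain ⟨_, _, hmem⟩ := hcyc (x, y) hxy
      rw [if_pos hxy]
      exact_mod_cast Nat.cast_pos.2 (List.count_pos_iff.2 hmem)
  · intro j
    rw [Finset.sum_comm]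
    conv_rhs => rw [Finset.sum_comm]
    refine Finset.sum_congr rfl fun e _ => ?_
    by_cases h : r e.1 e.2
    · simp only [if_pos h]
      obtain ⟨⟨hne, hclosed⟩, _, _⟩ := hcyc e h
      exact_mod_cast closed_walk_conservation (cyc e) hne hclosed j
    · simp [h]
end Circulation

section ExpAux
variable {M : ℕ}

lemma pow_entry_nonneg (A : Matrix (Fin M) (Fin M) ℝ) (hA : ∀ i j, 0 ≤ A i j) :
    ∀ (n : ℕ) (i j : Fin M), 0 ≤ (A ^ n) i j := by
  intro n
  induction n with
  | zero =>
    intro i j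
    rw [pow_zero]
    by_cases h : i = j <;> simp [Matrix.one_apply, h]
  | succ n ih =>
    intro i j
    rw [pow_succ, Matrix.mul_apply]
    exact Finset.sum_nonneg fun k _ => mul_nonneg (ih i k) (hA k j)

lemma hasSum_exp_entry (A : Matrix (Fin M) (Fin M) ℝ) (i j : Fin M) :
    HasSum (fun n : ℕ => (n.factorial⁻¹ : ℝ) * (A ^ n) i j) (exp A i j) := by
  letI : SeminormedRing (Matrix (Fin M) (Fin M) ℝ) := Matrix.linftyOpSemiNormedRing
  letI : NormedRing (Matrix (Fin M) (Fin M) ℝ) := Matrix.linftyOpNormedRing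
  letI : NormedAlgebra ℝ (Matrix (Fin M) (Fin M) ℝ) := Matrix.linftyOpNormedAlgebra
  have h : HasSum (fun n : ℕ => (n.factorial⁻¹ : ℝ) • A ^ n) (exp A) := by
    rw [exp_eq_tsum (𝕂 := ℝ)]
    exact (expSeries_summable' (𝕂 := ℝ) A).hasSum
  let L : Matrix (Fin M) (Fin M) ℝ →ₗ[ℝ] ℝ :=
    { toFun := fun B => B i j, map_add' := fun _ _ => rfl, map_smul' := fun _ _ => rfl }
  have hL : Continuous L := L.continuous_of_finiteDimensional
  have := h.map L.toAddMonoidHom hL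
  exact this

lemma exp_entry_nonneg (A : Matrix (Fin M) (Fin M) ℝ) (hA : ∀ i j, 0 ≤ A i j) (i j : Fin M) :
    0 ≤ exp A i j :=
  hasSum_le (fun n => mul_nonneg (by positivity) (pow_entry_nonneg A hA n i j)) hasSum_zero
    (hasSum_exp_entry A i j)

lemma exp_entry_ge_term (A : Matrix (Fin M) (Fin M) ℝ) (hA : ∀ i j, 0 ≤ A i j)
    (n : ℕ) (i j : Fin M) :
    (n.factorial⁻¹ : ℝ) * (A ^ n) i j ≤ exp A i j := by
  have := sum_le_hasSum {n}
    (fun m _ => mul_nonneg (by positivity) (pow_entry_nonneg A hA m i j))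
    (hasSum_exp_entry A i j)
  simpa using this

lemma exp_mulVec_eq_self (A : Matrix (Fin M) (Fin M) ℝ) (v : Fin M → ℝ)
    (h : A.mulVec v = 0) : (exp A).mulVec v = v := by
  letI : SeminormedRing (Matrix (Fin M) (Fin M) ℝ) := Matrix.linftyOpSemiNormedRing
  letI : NormedRing (Matrix (Fin M) (Fin M) ℝ) := Matrix.linftyOpNormedRing
  letI : NormedAlgebra ℝ (Matrix (Fin M) (Fin M) ℝ) := Matrix.linftyOpNormedAlgebra
  have hs : HasSum (fun n : ℕ => (n.factorial⁻¹ : ℝ) • A ^ n) (exp A) := by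
    rw [exp_eq_tsum (𝕂 := ℝ)]
    exact (expSeries_summable' (𝕂 := ℝ) A).hasSum
  let L : Matrix (Fin M) (Fin M) ℝ →ₗ[ℝ] (Fin M → ℝ) :=
    { toFun := fun B => B.mulVec v,
      map_add' := fun B C => Matrix.add_mulVec B C v,
      map_smul' := fun c B => Matrix.smul_mulVec c B v }
  have hL : Continuous L := L.continuous_of_finiteDimensional
  have h2 := hs.map L.toAddMonoidHom hL
  have hvan : ∀ n : ℕ, n ≠ 0 → L ((n.factorial⁻¹ : ℝ) • A ^ n) = 0 := by
    intro n hn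
    obtain ⟨m, rfl⟩ := Nat.exists_eq_succ_of_ne_zero hn
    show (((m + 1).factorial⁻¹ : ℝ) • A ^ (m + 1)).mulVec v = 0
    rw [Matrix.smul_mulVec, pow_succ, ← Matrix.mulVec_mulVec, h,
      Matrix.mulVec_zero, smul_zero]
  have h4 := hasSum_single (f := fun n : ℕ => L ((n.factorial⁻¹ : ℝ) • A ^ n)) 0 hvan
  have h0 : (fun n : ℕ => L ((n.factorial⁻¹ : ℝ) • A ^ n)) 0 = v := by
    show ((((0:ℕ).factorial : ℝ))⁻¹ • A ^ 0).mulVec v = v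
    simp [Matrix.one_mulVec]
  rw [show L (((Nat.factorial 0 : ℕ) : ℝ)⁻¹ • A ^ 0) = v from h0] at h4
  exact h2.unique h4

lemma exp_smul_one (c : ℝ) :
    exp (c • (1 : Matrix (Fin M) (Fin M) ℝ)) = Real.exp c • 1 := by
  letI : SeminormedRing (Matrix (Fin M) (Fin M) ℝ) := Matrix.linftyOpSemiNormedRing
  letI : NormedRing (Matrix (Fin M) (Fin M) ℝ) := Matrix.linftyOpNormedRing
  letI : NormedAlgebra ℝ (Matrix (Fin M) (Fin M) ℝ) := Matrix.linftyOpNormedAlgebra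
  have hs : HasSum (fun n : ℕ => (n.factorial⁻¹ : ℝ) • (c • (1 : Matrix (Fin M) (Fin M) ℝ)) ^ n)
      (exp (c • (1 : Matrix (Fin M) (Fin M) ℝ))) := by
    rw [exp_eq_tsum (𝕂 := ℝ)]
    exact (expSeries_summable' (𝕂 := ℝ) _).hasSum
  have hr : HasSum (fun n : ℕ => (n.factorial⁻¹ : ℝ) * c ^ n) (Real.exp c) := by
    have : HasSum (fun n : ℕ => (n.factorial⁻¹ : ℝ) • c ^ n) (exp c) := by
      rw [exp_eq_tsum (𝕂 := ℝ)]
      exact (expSeries_summable' (𝕂 := ℝ) c).hasSum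
    simpa [← Real.exp_eq_exp_ℝ, smul_eq_mul] using this
  have hr2 := hr.smul_const (1 : Matrix (Fin M) (Fin M) ℝ)
  have : (fun n : ℕ => ((n.factorial⁻¹ : ℝ) * c ^ n) • (1 : Matrix (Fin M) (Fin M) ℝ))
      = fun n : ℕ => (n.factorial⁻¹ : ℝ) • (c • (1 : Matrix (Fin M) (Fin M) ℝ)) ^ n := by
    funext n
    rw [smul_pow, one_pow, smul_smul]
  rw [this] at hr2
  exact hs.unique hr2

end ExpAux

section Contraction
variable {M : ℕ}

lemma mulVec_transpose_apply (P : Matrix (Fin M) (Fin M) ℝ) (v : Fin M → ℝ) (j : Fin M) :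
    Pᵀ.mulVec v j = ∑ i, P i j * v i := by
  simp [Matrix.mulVec, dotProduct, Matrix.transpose_apply]

lemma stochastic_contraction (P : Matrix (Fin M) (Fin M) ℝ)
    (hP0 : ∀ i j, 0 ≤ P i j) (hP1 : ∀ i, ∑ j, P i j = 1)
    (s : Fin M) (ε : ℝ) (hε0 : 0 ≤ ε) (hεP : ∀ i, ε ≤ P i s)
    (v : Fin M → ℝ) (hv : ∑ i, v i = 0) :
    (∑ i, Pᵀ.mulVec v i = 0) ∧
    ∑ j, |Pᵀ.mulVec v j| ≤ (1 - ε) * ∑ i, |v i| := by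
  classical
  constructor
  · simp only [mulVec_transpose_apply]
    rw [Finset.sum_comm]
    rw [Finset.sum_congr rfl (fun i _ => by rw [← Finset.sum_mul, hP1 i, one_mul] : 
      ∀ i ∈ Finset.univ, ∑ j, P i j * v i = v i)]
    exact hv
  · set P' : Fin M → Fin M → ℝ := fun i j => P i j - if j = s then ε else 0 with hP'
    have hP'0 : ∀ i j, 0 ≤ P' i j := by
      intro i j
      by_cases h : j = s
      · subst h; simpa [P'] using sub_nonneg.2 (hεP i)
      · simpa [P', h] using hP0 i j
    have hkey : ∀ j, Pᵀ.mulVec v j = ∑ i, P' i j * v i := by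
      intro j
      rw [mulVec_transpose_apply]
      simp only [P', sub_mul, Finset.sum_sub_distrib]
      rw [← Finset.mul_sum, hv, mul_zero, sub_zero]
    calc ∑ j, |Pᵀ.mulVec v j| = ∑ j, |∑ i, P' i j * v i| := by
          simp only [hkey]
      _ ≤ ∑ j, ∑ i, |P' i j * v i| :=
          Finset.sum_le_sum fun j _ => Finset.abs_sum_le_sum_abs _ _
      _ = ∑ i, (∑ j, P' i j) * |v i| := by
          rw [Finset.sum_comm]
          refine Finset.sum_congr rfl fun i _ => ?_
          rw [Finset.sum_mul]
          refine Finset.sum_congr rfl fun j _ => ?_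
          rw [abs_mul, abs_of_nonneg (hP'0 i j)]
      _ = ∑ i, (1 - ε) * |v i| := by
          refine Finset.sum_congr rfl fun i _ => ?_
          congr 1
          simp only [P', Finset.sum_sub_distrib, hP1 i, Finset.sum_ite_eq' Finset.univ s,
            Finset.mem_univ, if_pos]
      _ = (1 - ε) * ∑ i, |v i| := by rw [Finset.mul_sum]

end Contraction

lemma exists_exp_decay (M : ℕ) (hM : 1 ≤ M) (Q : Matrix (Fin M) (Fin M) ℝ)
    (hoff : ∀ i j, i ≠ j → 0 ≤ Q i j)
    (hrow : ∀ i, ∑ j, Q i j = 0)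
    (s : Fin M)
    (hreach : ∀ i, Relation.ReflTransGen (fun a b => a ≠ b ∧ 0 < Q a b) i s) :
    ∃ C lam : ℝ, 0 < C ∧ 0 < lam ∧ ∀ v : Fin M → ℝ, (∑ i, v i = 0) → ∀ t : ℝ, 0 ≤ t →
      ∑ j, |(exp (t • Qᵀ)).mulVec v j| ≤ C * Real.exp (-lam * t) * ∑ i, |v i| := by
  classical
  set μ : ℝ := 1 + ∑ i, |Q i i| with hμ
  set B : Matrix (Fin M) (Fin M) ℝ := Q + μ • 1 with hB
  have hBapp : ∀ i j, B i j = Q i j + (if i = j then μ else 0) := by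
    intro i j
    simp [hB, Matrix.add_apply, Matrix.smul_apply, Matrix.one_apply]
  have hB1 : ∀ i, 1 ≤ B i i := by
    intro i
    rw [hBapp]
    have h1 : |Q i i| ≤ ∑ k, |Q k k| :=
      Finset.single_le_sum (fun k _ => abs_nonneg (Q k k)) (Finset.mem_univ i)
    have h2 : -Q i i ≤ |Q i i| := neg_le_abs _
    rw [if_pos rfl]
    linarith [hμ]
  have hB0 : ∀ i j, 0 ≤ B i j := by
    intro i j
    by_cases h : i = j
    · subst h
      linarith [hB1 i]
    · rw [hBapp, if_neg h, add_zero]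
      exact hoff i j h
  -- splitting of exp (t • Q)
  have hsplit : ∀ t : ℝ, exp (t • Q) = Real.exp (-(t * μ)) • exp (t • B) := by
    intro t
    have hdecomp : t • Q = (-(t * μ)) • (1 : Matrix (Fin M) (Fin M) ℝ) + t • B := by
      rw [hB, smul_add, smul_smul]
      module
    have hcomm : Commute ((-(t * μ)) • (1 : Matrix (Fin M) (Fin M) ℝ)) (t • B) :=
      ((Commute.one_left (t • B)).smul_left _)
    rw [hdecomp, Matrix.exp_add_of_commute _ _ hcomm, exp_smul_one, smul_mul_assoc, one_mul]
  have hBt0 : ∀ t : ℝ, 0 ≤ t → ∀ i j, 0 ≤ (t • B) i j := by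
    intro t ht i j
    simpa [Matrix.smul_apply] using mul_nonneg ht (hB0 i j)
  have hexp0 : ∀ t : ℝ, 0 ≤ t → ∀ i j, 0 ≤ exp (t • Q) i j := by
    intro t ht i j
    rw [hsplit]
    simp only [Matrix.smul_apply, smul_eq_mul]
    exact mul_nonneg (Real.exp_nonneg _) (exp_entry_nonneg _ (hBt0 t ht) i j)
  have hrowQ : ∀ t : ℝ, (t • Q).mulVec (fun _ => 1) = 0 := by
    intro t
    funext i
    simp [Matrix.mulVec, dotProduct, Matrix.smul_apply, ← Finset.mul_sum, hrow i]
  have hexp1 : ∀ t : ℝ, ∀ i, ∑ j, exp (t • Q) i j = 1 := by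
    intro t i
    have := exp_mulVec_eq_self (t • Q) (fun _ => 1) (hrowQ t)
    have h2 := congrFun this i
    simpa [Matrix.mulVec, dotProduct] using h2
  -- positivity of powers of B along reachability
  have hpow_mono : ∀ (i : Fin M) (n : ℕ), 0 < (B ^ n) i s → 0 < (B ^ (n + 1)) i s := by
    intro i n hn
    rw [pow_succ, Matrix.mul_apply]
    have hterm : 0 < (B ^ n) i s * B s s :=
      mul_pos hn (lt_of_lt_of_le one_pos (hB1 s))
    refine lt_of_lt_of_le hterm ?_
    exact Finset.single_le_sum
      (fun k _ => mul_nonneg (pow_entry_nonneg B hB0 n i k) (hB0 k s)) (Finset.mem_univ s)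
  have hpow_pos : ∀ i : Fin M, ∃ n, 0 < (B ^ n) i s := by
    intro i
    induction hreach i using Relation.ReflTransGen.head_induction_on with
    | refl => exact ⟨0, by simp [Matrix.one_apply]⟩
    | head hab _ ih =>
      obtain ⟨n, hn⟩ := ih
      rename_i a c _
      refine ⟨n + 1, ?_⟩
      rw [pow_succ', Matrix.mul_apply]
      have hterm : 0 < B a c * (B ^ n) c s := by
        have : 0 < B a c := by
          rw [hBapp, if_neg hab.1, add_zero]
          exact hab.2
        exact mul_pos this hn
      refine lt_of_lt_of_le hterm ?_
      exact Finset.single_le_sum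
        (fun k _ => mul_nonneg (hB0 a k) (pow_entry_nonneg B hB0 n k s)) (Finset.mem_univ c)
  have hpowN : ∃ N : ℕ, ∀ i, 0 < (B ^ N) i s := by
    choose nf hnf using hpow_pos
    refine ⟨Finset.univ.sup nf, fun i => ?_⟩
    have hle : nf i ≤ Finset.univ.sup nf := Finset.le_sup (Finset.mem_univ i)
    exact Nat.le_induction (hnf i) (fun n _ h => hpow_mono i n h) _ hle
  obtain ⟨N, hN⟩ := hpowN
  set P₁ : Matrix (Fin M) (Fin M) ℝ := exp ((1:ℝ) • Q) with hP₁
  have hP₁0 : ∀ i j, 0 ≤ P₁ i j := hexp0 1 zero_le_one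
  have hP₁1 : ∀ i, ∑ j, P₁ i j = 1 := hexp1 1
  have hP₁s : ∀ i, 0 < P₁ i s := by
    intro i
    rw [hP₁, hsplit 1]
    simp only [Matrix.smul_apply, smul_eq_mul]
    apply mul_pos (Real.exp_pos _)
    calc (0:ℝ) < (N.factorial⁻¹ : ℝ) * (B ^ N) i s :=
          mul_pos (by positivity) (hN i)
      _ ≤ exp ((1:ℝ) • B) i s := by
          rw [one_smul]
          exact exp_entry_ge_term B hB0 N i s
  obtain ⟨i₀, _, hi₀⟩ := Finset.exists_min_image Finset.univ (fun i => P₁ i s)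
    ⟨⟨0, hM⟩, Finset.mem_univ _⟩
  set ε : ℝ := min (P₁ i₀ s) (1/2) with hεdef
  have hε_pos : 0 < ε := lt_min (hP₁s i₀) (by norm_num)
  have hε_half : ε ≤ 1/2 := min_le_right _ _
  have hε_le : ∀ i, ε ≤ P₁ i s := fun i =>
    le_trans (min_le_left _ _) (hi₀ i (Finset.mem_univ i))
  set ρ : ℝ := 1 - ε with hρdef
  have hρ0 : 0 < ρ := by rw [hρdef]; linarith
  have hρ1 : ρ < 1 := by rw [hρdef]; linarith
  set lam : ℝ := -Real.log ρ with hlamdef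
  have hlam : 0 < lam := by
    have := Real.log_neg hρ0 hρ1
    rw [hlamdef]; linarith
  refine ⟨ρ⁻¹, lam, inv_pos.2 hρ0, hlam, ?_⟩
  intro v hv t ht
  have hiter : ∀ (n : ℕ) (u : Fin M → ℝ), (∑ i, u i = 0) →
      (∑ i, ((P₁ᵀ) ^ n).mulVec u i = 0) ∧
      ∑ j, |((P₁ᵀ) ^ n).mulVec u j| ≤ ρ ^ n * ∑ i, |u i| := by
    intro n
    induction n with
    | zero =>
      intro u hu
      rw [pow_zero]
      constructor
      · simpa [Matrix.one_mulVec] using hu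
      · simp [Matrix.one_mulVec]
    | succ n ih =>
      intro u hu
      have hstep := stochastic_contraction P₁ hP₁0 hP₁1 s ε hε_pos.le hε_le u hu
      have hrec := ih (P₁ᵀ.mulVec u) hstep.1
      have heq : ((P₁ᵀ) ^ (n+1)).mulVec u = ((P₁ᵀ) ^ n).mulVec (P₁ᵀ.mulVec u) := by
        rw [pow_succ, ← Matrix.mulVec_mulVec]
      constructor
      · rw [heq]; exact hrec.1
      · rw [heq]
        calc ∑ j, |((P₁ᵀ) ^ n).mulVec (P₁ᵀ.mulVec u) j|
            ≤ ρ ^ n * ∑ j, |P₁ᵀ.mulVec u j| := hrec.2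
          _ ≤ ρ ^ n * ((1 - ε) * ∑ i, |u i|) :=
              mul_le_mul_of_nonneg_left hstep.2 (pow_nonneg hρ0.le n)
          _ = ρ ^ (n+1) * ∑ i, |u i| := by rw [← hρdef]; ring
  set n : ℕ := ⌊t⌋₊ with hndef
  have hn_le : (n : ℝ) ≤ t := Nat.floor_le ht
  have ht_lt : t < n + 1 := Nat.lt_floor_add_one t
  have hdecompt : t • Q = (n:ℝ) • Q + (t - n) • Q := by module
  have hcommQ : Commute ((n:ℝ) • Q) ((t - n) • Q) :=
    ((Commute.refl Q).smul_left _).smul_right _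
  have hexp_t : exp (t • Q) = exp ((n:ℝ) • Q) * exp ((t - n) • Q) := by
    rw [hdecompt, Matrix.exp_add_of_commute _ _ hcommQ]
  have hnsmul : exp ((n:ℝ) • Q) = P₁ ^ n := by
    rw [hP₁, one_smul, Nat.cast_smul_eq_nsmul, Matrix.exp_nsmul]
  have htrans : exp (t • Qᵀ) = (exp ((t - n) • Q))ᵀ * (P₁ᵀ) ^ n := by
    have h1 : t • Qᵀ = (t • Q)ᵀ := (Matrix.transpose_smul t Q).symm
    rw [h1, Matrix.exp_transpose, hexp_t, Matrix.transpose_mul, hnsmul, Matrix.transpose_pow]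
  have hw := hiter n v hv
  have htn : (0:ℝ) ≤ t - n := by linarith
  have hrem := stochastic_contraction (exp ((t - n) • Q)) (hexp0 _ htn) (hexp1 _)
    s 0 le_rfl (fun i => hexp0 _ htn i s) (((P₁ᵀ) ^ n).mulVec v) hw.1
  have hfinal : ∑ j, |(exp (t • Qᵀ)).mulVec v j| ≤ ρ ^ n * ∑ i, |v i| := by
    rw [htrans, ← Matrix.mulVec_mulVec]
    calc ∑ j, |(exp ((t - n) • Q))ᵀ.mulVec (((P₁ᵀ) ^ n).mulVec v) j|
        ≤ (1 - 0) * ∑ j, |((P₁ᵀ) ^ n).mulVec v j| := hrem.2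
      _ = ∑ j, |((P₁ᵀ) ^ n).mulVec v j| := by rw [sub_zero, one_mul]
      _ ≤ ρ ^ n * ∑ i, |v i| := hw.2
  have hρn : ρ ^ n ≤ ρ⁻¹ * Real.exp (-lam * t) := by
    have hlog : Real.log ρ < 0 := Real.log_neg hρ0 hρ1
    have h1 : ρ ^ n = Real.exp ((n : ℝ) * Real.log ρ) := by
      rw [← Real.exp_log (pow_pos hρ0 n), Real.log_pow]
    have h2 : (n : ℝ) * Real.log ρ ≤ (t - 1) * Real.log ρ :=
      mul_le_mul_of_nonpos_right (by linarith) hlog.le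
    calc ρ ^ n = Real.exp ((n : ℝ) * Real.log ρ) := h1
      _ ≤ Real.exp ((t - 1) * Real.log ρ) := Real.exp_le_exp.2 h2
      _ = ρ⁻¹ * Real.exp (-lam * t) := by
          have h3 : (t - 1) * Real.log ρ = (-Real.log ρ) + (-lam * t) := by
            rw [hlamdef]; ring
          rw [h3, Real.exp_add, Real.exp_neg, Real.exp_log hρ0]
  calc ∑ j, |(exp (t • Qᵀ)).mulVec v j| ≤ ρ ^ n * ∑ i, |v i| := hfinal
    _ ≤ (ρ⁻¹ * Real.exp (-lam * t)) * ∑ i, |v i| :=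
        mul_le_mul_of_nonneg_right hρn (Finset.sum_nonneg fun i _ => abs_nonneg _)
    _ = ρ⁻¹ * Real.exp (-lam * t) * ∑ i, |v i| := by ring

/-- for a strongly connected digraph `G = (V, E)` without self-loops and a
target distribution `x^d` with strongly connected support, there is a transition-rate
matrix `Q` compatible with `E` such that `exp (t Qᵀ)` drives every initial distribution
to `x^d` exponentially fast. -/
lemma euclNorm_le_l1 {M : ℕ} (v : Fin M → ℝ) : euclNorm v ≤ ∑ i, |v i| := by
  have h1 : ∑ i, v i ^ 2 ≤ (∑ i, |v i|) ^ 2 := by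
    rw [sq, Finset.sum_mul]
    refine Finset.sum_le_sum fun i _ => ?_
    calc v i ^ 2 = |v i| * |v i| := by rw [← sq, sq_abs]
      _ ≤ |v i| * ∑ j, |v j| :=
          mul_le_mul_of_nonneg_left
            (Finset.single_le_sum (fun j _ => abs_nonneg (v j)) (Finset.mem_univ i))
            (abs_nonneg _)
  calc euclNorm v ≤ Real.sqrt ((∑ i, |v i|) ^ 2) := Real.sqrt_le_sqrt h1
    _ = ∑ i, |v i| := Real.sqrt_sq (Finset.sum_nonneg fun i _ => abs_nonneg _)

theorem stabilization_by_constant_rates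
    (M : ℕ)(hM : 1 ≤ M) (E : Set (Fin M × Fin M))
    (hloop : ∀ i : Fin M, (i, i) ∉ E)
    (hconn : ∀ i j : Fin M, Relation.ReflTransGen (fun a b => (a, b) ∈ E) i j)
    (xd : Fin M → ℝ) (hxd : xd ∈ probSimplex M)
    (hsupp : ∀ i j : Fin M, 0 < xd i → 0 < xd j →
      Relation.ReflTransGen (fun a b => (a, b) ∈ E ∧ 0 < xd a ∧ 0 < xd b) i j) :
    ∃ (Q : Matrix (Fin M) (Fin M) ℝ) (C lam : ℝ),
      0 < C ∧ 0 < lam ∧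
      (∀ i j, i ≠ j → 0 ≤ Q i j) ∧
      (∀ i j, i ≠ j → (i, j) ∉ E → Q i j = 0) ∧
      (∀ i, ∑ j, Q i j = 0) ∧
      ∀ x0 ∈ probSimplex M, ∀ t : ℝ, 0 ≤ t →
        euclNorm ((NormedSpace.exp (t • Qᵀ)).mulVec x0 - xd) ≤ C * Real.exp (-lam * t) := by
  classical
  obtain ⟨hxd0, hxd1⟩ := hxd
  set r : Fin M → Fin M → Prop := fun a b => (a, b) ∈ E ∧ 0 < xd a ∧ 0 < xd b with hrdef
  obtain ⟨w, hw0, hwz, hwp, hwc⟩ := exists_circulation r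
    (fun a b h => hsupp b a h.2.2 h.2.1)
  set q : Fin M → Fin M → ℝ := fun i j =>
    if (i, j) ∈ E then (if 0 < xd i then (if 0 < xd j then w i j / xd i else 0) else 1) else 0
    with hqdef
  have hq0 : ∀ i j, 0 ≤ q i j := by
    intro i j
    simp only [hqdef]
    split
    · split
      · split
        · rename_i h1 h2 h3
          exact div_nonneg (hw0 i j) (le_of_lt h2)
        · exact le_refl 0
      · exact zero_le_one
    · exact le_refl 0
  have hqii : ∀ i, q i i = 0 := by
    intro i
    rw [hqdef]
    simp [hloop i]
  set Q : Matrix (Fin M) (Fin M) ℝ :=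
    Matrix.of (fun i j => if i = j then -(∑ k, q i k) else q i j) with hQdef
  have hQapp : ∀ i j, Q i j = q i j + (if i = j then -(∑ k, q i k) else 0) := by
    intro i j
    by_cases h : i = j
    · subst h
      simp [hQdef, hqii i]
    · simp [hQdef, h]
  have hQoff : ∀ i j, i ≠ j → Q i j = q i j := by
    intro i j h
    rw [hQapp, if_neg h, add_zero]
  have hQrow : ∀ i, ∑ j, Q i j = 0 := by
    intro i
    simp only [hQapp]
    rw [Finset.sum_add_distrib, Finset.sum_ite_eq Finset.univ i (fun _ => -(∑ k, q i k))]
    simp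
  -- stationarity
  have hkey : ∀ i j, xd i * q i j = w i j := by
    intro i j
    simp only [hqdef]
    by_cases hE : (i, j) ∈ E
    · rw [if_pos hE]
      by_cases hi : 0 < xd i
      · rw [if_pos hi]
        by_cases hj : 0 < xd j
        · rw [if_pos hj]
          field_simp
        · rw [if_neg hj, mul_zero]
          exact (hwz i j (fun hr => hj hr.2.2)).symm
      · have hxi : xd i = 0 := le_antisymm (not_lt.1 hi) (hxd0 i)
        rw [if_neg hi, hxi, zero_mul]
        exact (hwz i j (fun hr => hi hr.2.1)).symm
    · rw [if_neg hE, mul_zero]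
      exact (hwz i j (fun hr => hE hr.1)).symm
  have hstat : ∀ j, ∑ i, xd i * Q i j = 0 := by
    intro j
    simp only [hQapp, mul_add]
    rw [Finset.sum_add_distrib]
    have h1 : ∑ i, xd i * q i j = ∑ i, w i j :=
      Finset.sum_congr rfl fun i _ => hkey i j
    have h2 : ∑ i, xd i * (if i = j then -(∑ k, q i k) else 0) = -(∑ k, w j k) := by
      rw [Finset.sum_eq_single j]
      · rw [if_pos rfl, mul_neg, neg_inj, Finset.mul_sum]
        exact Finset.sum_congr rfl fun k _ => hkey j k
      · intro i _ hij
        rw [if_neg hij, mul_zero]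
      · intro h
        exact absurd (Finset.mem_univ j) h
    rw [h1, h2, hwc j]
    exact add_neg_cancel _
  have hex : ∃ s, 0 < xd s := by
    by_contra h
    push_neg at h
    have : ∑ i, xd i ≤ 0 := Finset.sum_nonpos fun i _ => h i
    linarith [hxd1]
  obtain ⟨s, hs⟩ := hex
  have hQpos_edge : ∀ a b, r a b → (a ≠ b ∧ 0 < Q a b) := by
    intro a b hab
    have hne : a ≠ b := by rintro rfl; exact hloop a hab.1
    refine ⟨hne, ?_⟩
    rw [hQoff a b hne]
    simp only [hqdef]
    rw [if_pos hab.1, if_pos hab.2.1, if_pos hab.2.2]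
    exact div_pos (hwp a b hab) hab.2.1
  have hreachS : ∀ i, 0 < xd i → Relation.ReflTransGen (fun a b => a ≠ b ∧ 0 < Q a b) i s :=
    fun i hi => Relation.ReflTransGen.mono hQpos_edge _ _ (hsupp i s hi hs)
  have hreach : ∀ i, Relation.ReflTransGen (fun a b => a ≠ b ∧ 0 < Q a b) i s := by
    intro i
    induction hconn i s using Relation.ReflTransGen.head_induction_on with
    | refl => exact Relation.ReflTransGen.refl
    | head hab hbs ih =>
      rename_i a c
      by_cases ha : 0 < xd a
      · exact hreachS a ha
      · have hne : a ≠ c := by rintro rfl; exact hloop a hab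
        refine Relation.ReflTransGen.head ⟨hne, ?_⟩ ih
        rw [hQoff a c hne]
        simp only [hqdef]
        rw [if_pos hab, if_neg ha]
        exact one_pos
  obtain ⟨C₀, lam, hC₀, hlam, hdecay⟩ := exists_exp_decay M hM Q
    (fun i j hne => hQoff i j hne ▸ hq0 i j) hQrow s hreach
  refine ⟨Q, 2 * C₀, lam, by positivity, hlam,
    fun i j hne => by rw [hQoff i j hne]; exact hq0 i j, ?_, hQrow, ?_⟩
  · intro i j hne hE
    rw [hQoff i j hne]
    simp only [hqdef]
    rw [if_neg hE]
  · intro x0 hx0 t ht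
    obtain ⟨hx00, hx01⟩ := hx0
    set v : Fin M → ℝ := x0 - xd with hvdef
    have hv : ∑ i, v i = 0 := by
      simp only [hvdef, Pi.sub_apply, Finset.sum_sub_distrib, hx01, hxd1, sub_self]
    have hstatQ : Qᵀ.mulVec xd = 0 := by
      funext j
      rw [mulVec_transpose_apply]
      rw [show ∑ i, Q i j * xd i = ∑ i, xd i * Q i j from
        Finset.sum_congr rfl fun i _ => mul_comm _ _, hstat j]
      rfl
    have hfix : (NormedSpace.exp (t • Qᵀ)).mulVec xd = xd := by
      apply exp_mulVec_eq_self
      rw [Matrix.smul_mulVec, hstatQ, smul_zero]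
    have hsub : (NormedSpace.exp (t • Qᵀ)).mulVec x0 - xd
        = (NormedSpace.exp (t • Qᵀ)).mulVec v := by
      rw [hvdef, Matrix.mulVec_sub, hfix]
    rw [hsub]
    have hl1v : ∑ i, |v i| ≤ 2 := by
      calc ∑ i, |v i| ≤ ∑ i, (|x0 i| + |xd i|) := by
            refine Finset.sum_le_sum fun i _ => ?_
            rw [hvdef, Pi.sub_apply]
            exact abs_sub _ _
        _ = 2 := by
            rw [Finset.sum_add_distrib]
            rw [Finset.sum_congr rfl fun i _ => abs_of_nonneg (hx00 i),
              Finset.sum_congr rfl fun i _ => abs_of_nonneg (hxd0 i), hx01, hxd1]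
            norm_num
    calc euclNorm ((NormedSpace.exp (t • Qᵀ)).mulVec v)
        ≤ ∑ j, |(NormedSpace.exp (t • Qᵀ)).mulVec v j| := euclNorm_le_l1 _
      _ ≤ C₀ * Real.exp (-lam * t) * ∑ i, |v i| := hdecay v hv t ht
      _ ≤ C₀ * Real.exp (-lam * t) * 2 :=
          mul_le_mul_of_nonneg_left hl1v (by positivity)
      _ = 2 * C₀ * Real.exp (-lam * t) := by ring
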